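/- Lebesgue planar measure satisfies the strong Bernstein–Markov inequality on any compact set K ⊂ ℂ that is the closure of its interior and has C¹ boundary; i.e., for every continuous R : K → ℝ and ε > 0 there is C > 0 with sup_K e^{-nR}|p| ≤ C(1+ε)^n ∫_K e^{-nR}|p| dλ for all polynomials p of degree ≤ n. -/

import Mathlib

open MeasureTheory Complex Set Filter
open scoped Topology ENNReal NNReal Real

noncomputable section

def logPlus (t : ℝ) : ℝ := max (Real.log t) 0

def IsSubharmonicFn (u : ℂ → ℝ) : Prop :=
  UpperSemicontinuous u ∧ ∀ (z : ℂ) (r : ℝ), 0 < r →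
    u z ≤ (2 * Real.pi)⁻¹ * ∫ θ in (0:ℝ)..(2 * Real.pi), u (z + r * Complex.exp (θ * Complex.I))

def GreenAdmissible (Y : Set ℂ) (R : ℂ → ℝ) (u : ℂ → ℝ) : Prop :=
  IsSubharmonicFn u ∧ (∀ w ∈ Y, u w ≤ R w) ∧ ∃ C : ℝ, ∀ w, u w ≤ logPlus ‖w‖ + C

def greenFn (Y : Set ℂ) (R : ℂ → ℝ) (z : ℂ) : ℝ :=
  sSup {x | ∃ u, GreenAdmissible Y R u ∧ u z = x}

def RegularSet (K : Set ℂ) : Prop := Continuous (greenFn K 0)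

def energyE (R : ℂ → ℝ) (ν : Measure ℂ) : ℝ :=
  -∫ z, ∫ t, Real.log (‖z - t‖) ∂ν ∂ν + 2 * ∫ z, R z ∂ν

def IsEquilibrium (K : Set ℂ) (R : ℂ → ℝ) (μ : Measure ℂ) : Prop :=
  IsProbabilityMeasure μ ∧ μ Kᶜ = 0 ∧
  ∀ ν : Measure ℂ, IsProbabilityMeasure ν → ν Kᶜ = 0 → energyE R μ ≤ energyE R ν

def msupport (μ : Measure ℂ) : Set ℂ := {z | ∀ U ∈ 𝓝 z, μ U ≠ 0}

def wPoly (R : ℂ → ℝ) (n : ℕ) (p : Polynomial ℂ) (z : ℂ) : ℝ :=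
  Real.exp (-(n : ℝ) * R z) * ‖Polynomial.eval z p‖

def WeightedBM (K : Set ℂ) (R : ℂ → ℝ) (τ : Measure ℂ) : Prop :=
  ∀ ε > 0, ∃ C > 0, ∀ (n : ℕ) (p : Polynomial ℂ), p.natDegree ≤ n →
    ∀ z ∈ K, wPoly R n p z ≤ C * (1 + ε) ^ n * ∫ w in K, wPoly R n p w ∂τ

def Avand (β : ℝ) (Q : ℂ → ℝ) (n : ℕ) (z : Fin n → ℂ) : ℝ :=
  (∏ p ∈ Finset.univ.filter (fun p : Fin n × Fin n => p.1 < p.2), ‖z p.1 - z p.2‖) ^ β *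
    Real.exp (-2 * n * ∑ j, Q (z j))

def Zc (K : Set ℂ) (τ : Measure ℂ) (β : ℝ) (Q : ℂ → ℝ) (n : ℕ) : ℝ :=
  ∫ z in Set.univ.pi (fun _ : Fin n => K), Avand β Q n z ∂(Measure.pi fun _ => τ)

def ProbE (K : Set ℂ) (τ : Measure ℂ) (β : ℝ) (Q : ℂ → ℝ) (n : ℕ) (S : Set (Fin n → ℂ)) : ℝ :=
  (∫ z in S ∩ Set.univ.pi (fun _ : Fin n => K), Avand β Q n z ∂(Measure.pi fun _ => τ)) / Zc K τ β Q n

def countPM {n : ℕ} (hn : n ≠ 0) (z : Fin n → ℂ) : ProbabilityMeasure ℂ :=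
  ⟨(n : ℝ≥0∞)⁻¹ • ∑ j, Measure.dirac (z j), by
    constructor
    simp [Measure.smul_apply, Measure.coe_finset_sum, Finset.sum_apply, measure_univ, smul_eq_mul]
    exact ENNReal.inv_mul_cancel (by exact_mod_cast hn) (by simp)⟩

def Ebeta (β : ℝ) (Q : ℂ → ℝ) (ν : Measure ℂ) : ℝ :=
  -(β/2) * ∫ x, ∫ y, Real.log (‖x - y‖) ∂ν ∂ν + 2 * ∫ x, Q x ∂ν

def IsCompactNbhdIn (K S N : Set ℂ) : Prop :=
  IsCompact N ∧ N ⊆ K ∧ ∃ U : Set ℂ, IsOpen U ∧ S ⊆ U ∧ U ∩ K ⊆ N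

section BMAux
open Metric
set_option maxHeartbeats 1000000

lemma integral_pow_cB {r : ℝ} {k : ℕ} (hk : k ≠ 0) :
    ∫ w in Metric.closedBall (0:ℂ) r, w ^ k = 0 := by
  set a : Circle := Circle.exp (Real.pi / k) with ha
  have hak : (a : ℂ) ^ k = -1 := by
    rw [ha, Circle.coe_exp, ← Complex.exp_nat_mul]
    have hk' : (k : ℂ) ≠ 0 := Nat.cast_ne_zero.mpr hk
    have : (k : ℂ) * (↑(Real.pi / (k:ℝ)) * Complex.I) = Real.pi * Complex.I := by
      push_cast
      field_simp
    rw [this, Complex.exp_pi_mul_I]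
  have hmp : MeasurePreserving (fun w : ℂ => (a:ℂ) * w) volume volume := by
    have := (rotation a).measurePreserving
    have h : (fun w : ℂ => (a:ℂ) * w) = ⇑(rotation a) := funext fun w => (rotation_apply a w).symm
    rw [h]
    exact this
  have hemb : MeasurableEmbedding (fun w : ℂ => (a:ℂ) * w) := by
    have := (rotation a).toHomeomorph.measurableEmbedding
    convert this using 1
    funext w
    exact (rotation_apply a w).symm
  have hpre : (fun w : ℂ => (a:ℂ) * w) ⁻¹' (Metric.closedBall 0 r) = Metric.closedBall 0 r := by
    ext w
    simp [Metric.mem_closedBall, dist_zero_right, norm_mul, Circle.norm_coe]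
  have key := hmp.setIntegral_preimage_emb hemb (fun w => w ^ k) (Metric.closedBall 0 r)
  rw [hpre] at key
  have key2 : ∀ w : ℂ, ((a:ℂ) * w) ^ k = (a:ℂ)^k * w^k := fun w => mul_pow _ _ _
  simp_rw [key2, hak] at key
  rw [MeasureTheory.integral_const_mul] at key
  have key' : (-1 : ℂ) * (∫ w in Metric.closedBall (0:ℂ) r, w ^ k)
      = ∫ w in Metric.closedBall (0:ℂ) r, w ^ k := key
  have h2 : (2 : ℂ) * ∫ w in Metric.closedBall (0:ℂ) r, w ^ k = 0 := by
    linear_combination -key'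
  exact (mul_eq_zero.mp h2).resolve_left two_ne_zero

lemma integral_poly_cB (p : Polynomial ℂ) (c : ℂ) {r : ℝ} (hr : 0 < r) :
    ∫ w in Metric.closedBall c r, p.eval w = (Real.pi * r ^ 2 : ℝ) • p.eval c := by
  have hemb : MeasurableEmbedding (fun w : ℂ => c + w) :=
    (Homeomorph.addLeft c).measurableEmbedding
  have hmp : MeasurePreserving (fun w : ℂ => c + w) volume volume :=
    measurePreserving_add_left volume c
  have hpre : (fun w : ℂ => c + w) ⁻¹' (Metric.closedBall c r) = Metric.closedBall 0 r := by
    ext w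
    simp [Metric.mem_closedBall, dist_eq_norm, add_sub_cancel_left]
  have key := hmp.setIntegral_preimage_emb hemb (fun w => p.eval w) (Metric.closedBall c r)
  rw [hpre] at key
  rw [← key]
  set q := Polynomial.taylor c p with hq
  have hqe : ∀ w : ℂ, p.eval (c + w) = q.eval w := by
    intro w
    rw [hq, Polynomial.taylor_eval, add_comm]
  simp_rw [hqe]
  have hsum : ∀ w : ℂ, q.eval w = ∑ i ∈ Finset.range (q.natDegree + 1), q.coeff i * w ^ i := by
    intro w; exact q.eval_eq_sum_range w
  simp_rw [hsum]
  rw [MeasureTheory.integral_finset_sum]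
  · have hterm : ∀ i ∈ Finset.range (q.natDegree + 1),
        (∫ w in Metric.closedBall (0:ℂ) r, q.coeff i * w ^ i)
          = if i = 0 then (Real.pi * r ^ 2 : ℝ) • p.eval c else 0 := by
      intro i _
      rw [MeasureTheory.integral_const_mul]
      by_cases hi : i = 0
      · subst hi
        simp only [pow_zero, if_true]
        rw [MeasureTheory.setIntegral_const]
        have hvol : (volume (Metric.closedBall (0:ℂ) r)).toReal = Real.pi * r ^ 2 := by
          rw [Complex.volume_closedBall]
          rw [ENNReal.toReal_mul, ENNReal.toReal_pow, ENNReal.toReal_ofReal hr.le]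
          simp [mul_comm]
        have hc0 : q.coeff 0 = p.eval c := by
          rw [Polynomial.coeff_zero_eq_eval_zero, hq, Polynomial.taylor_eval, zero_add]
        rw [measureReal_def, hvol, hc0]
        simp [smul_eq_mul, mul_comm]
      · rw [if_neg hi, integral_pow_cB hi, mul_zero]
    rw [Finset.sum_congr rfl hterm, Finset.sum_ite_eq' (Finset.range (q.natDegree + 1)) 0]
    simp
  · intro i _
    apply ContinuousOn.integrableOn_compact (isCompact_closedBall _ _)
    exact (continuous_const.mul (continuous_pow i)).continuousOn

lemma submean (p : Polynomial ℂ) (c : ℂ) {r : ℝ} (hr : 0 < r) :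
    Real.pi * r ^ 2 * ‖p.eval c‖ ≤ ∫ w in Metric.closedBall c r, ‖p.eval w‖ := by
  have h := integral_poly_cB p c hr
  have h1 : ‖(Real.pi * r ^ 2 : ℝ) • p.eval c‖ = Real.pi * r ^ 2 * ‖p.eval c‖ := by
    rw [norm_smul]
    congr 1
    rw [Real.norm_eq_abs]
    exact abs_of_nonneg (by positivity)
  rw [← h1, ← h]
  exact norm_integral_le_integral_norm _

lemma polyMaxMod (p : Polynomial ℂ) {w : ℂ} {t : ℝ} (ht : 0 < t) {M : ℝ}
    (hM : ∀ ζ ∈ Metric.sphere w t, ‖p.eval ζ‖ ≤ M) {ξ : ℂ} (hξ : dist ξ w ≤ t) :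
    ‖p.eval ξ‖ ≤ M := by
  have hd : DiffContOnCl ℂ (fun x => p.eval x) (Metric.ball w t) :=
    (p.differentiable).diffContOnCl
  have hfr : ∀ ζ ∈ frontier (Metric.ball w t), ‖p.eval ζ‖ ≤ M := by
    rw [frontier_ball w ht.ne']
    exact hM
  have hcl : ξ ∈ closure (Metric.ball w t) := by
    rw [closure_ball w ht.ne']
    exact Metric.mem_closedBall.mpr hξ
  exact Complex.norm_le_of_forall_mem_frontier_norm_le Metric.isBounded_ball hd hfr hcl

lemma polyGrowth (p : Polynomial ℂ) {n : ℕ} (hn : p.natDegree ≤ n) (w z : ℂ) {t s M : ℝ}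
    (ht : 0 < t) (hts : t ≤ s) (hz : dist z w ≤ s)
    (hM : ∀ ζ ∈ Metric.sphere w t, ‖p.eval ζ‖ ≤ M) :
    ‖p.eval z‖ ≤ (s / t) ^ n * M := by
  obtain ⟨ζ₁, hζ₁⟩ := (NormedSpace.sphere_nonempty (E := ℂ) (x := w) (r := t)).mpr ht.le
  have hM0 : 0 ≤ M := le_trans (norm_nonneg _) (hM ζ₁ hζ₁)
  have hst1 : (1 : ℝ) ≤ s / t := (one_le_div ht).mpr hts
  rcases le_or_gt (dist z w) t with hcase | hcase
  · calc ‖p.eval z‖ ≤ M := polyMaxMod p ht hM hcase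
    _ ≤ (s / t) ^ n * M := le_mul_of_one_le_left hM0 (one_le_pow₀ hst1)
  · -- z ≠ w
    have hzw : z ≠ w := by
      intro h; rw [h, dist_self] at hcase; exact absurd hcase (not_lt.mpr ht.le)
    have hzw' : z - w ≠ 0 := sub_ne_zero.mpr hzw
    set q : Polynomial ℂ :=
      ∑ k ∈ Finset.range (n + 1),
        Polynomial.C ((Polynomial.taylor w p).coeff k) * Polynomial.X ^ (n - k) with hqdef
    have hqe : ∀ u : ℂ, u ≠ 0 → q.eval u = u ^ n * p.eval (w + u⁻¹) := by
      intro u hu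
      have h1 : p.eval (w + u⁻¹) = (Polynomial.taylor w p).eval u⁻¹ := by
        rw [Polynomial.taylor_eval, add_comm]
      have h2 : (Polynomial.taylor w p).eval u⁻¹
          = ∑ k ∈ Finset.range (n + 1), (Polynomial.taylor w p).coeff k * (u⁻¹) ^ k := by
        apply Polynomial.eval_eq_sum_range'
        rw [Polynomial.natDegree_taylor]
        omega
      rw [h1, h2, Finset.mul_sum, hqdef]
      rw [Polynomial.eval_finset_sum]
      apply Finset.sum_congr rfl
      intro k hk
      have hkn : k ≤ n := by simp at hk; omega
      simp only [Polynomial.eval_mul, Polynomial.eval_C, Polynomial.eval_pow, Polynomial.eval_X]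
      rw [pow_sub₀ u hu hkn, inv_pow]
      field_simp
    have hqb : ∀ u ∈ Metric.sphere (0:ℂ) t⁻¹, ‖q.eval u‖ ≤ t⁻¹ ^ n * M := by
      intro u hu
      have hun : ‖u‖ = t⁻¹ := by simpa [Metric.mem_sphere, dist_zero_right] using hu
      have hu0 : u ≠ 0 := by
        intro h; rw [h, norm_zero] at hun; exact absurd hun.symm (ne_of_gt (inv_pos.mpr ht))
      have hζ : w + u⁻¹ ∈ Metric.sphere w t := by
        simp only [Metric.mem_sphere, dist_eq_norm, add_sub_cancel_left, norm_inv, hun]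
        rw [inv_inv]
      rw [hqe u hu0, norm_mul, norm_pow, hun]
      exact mul_le_mul_of_nonneg_left (hM _ hζ) (by positivity)
    have hu0mem : dist (z - w)⁻¹ (0:ℂ) ≤ t⁻¹ := by
      rw [dist_zero_right, norm_inv]
      have : t ≤ ‖z - w‖ := by rw [← dist_eq_norm]; exact hcase.le
      exact inv_anti₀ ht this
    have hq0 := polyMaxMod q (inv_pos.mpr ht) hqb hu0mem
    rw [hqe _ (inv_ne_zero hzw'), inv_inv] at hq0
    have : w + (z - w) = z := by ring
    rw [this, norm_mul, norm_pow, norm_inv] at hq0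
    -- hq0 : ‖z - w‖⁻¹ ^ n * ‖p.eval z‖ ≤ t⁻¹ ^ n * M
    have hzwpos : 0 < ‖z - w‖ := norm_pos_iff.mpr hzw'
    have step : ‖p.eval z‖ ≤ (‖z - w‖ / t) ^ n * M := by
      have := mul_le_mul_of_nonneg_left hq0 (le_of_lt (pow_pos hzwpos n))
      rw [← mul_assoc, ← mul_pow, mul_inv_cancel₀ hzwpos.ne', one_pow, one_mul] at this
      calc ‖p.eval z‖ ≤ ‖z - w‖ ^ n * (t⁻¹ ^ n * M) := this
        _ = (‖z - w‖ / t) ^ n * M := by rw [div_pow, div_eq_mul_inv, ← inv_pow]; ring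
    refine step.trans (mul_le_mul_of_nonneg_right (pow_le_pow_left₀ (by positivity) ?_ n) hM0)
    gcongr
    rwa [← dist_eq_norm]

lemma bdryLocal {K : Set ℂ} (x : ℂ) (f : ℂ → ℝ) (hf : ContDiffAt ℝ 1 f x)
    (hd : fderiv ℝ f x ≠ 0) (hiff : ∀ᶠ y in 𝓝 x, (y ∈ K ↔ f y ≤ 0))
    {η : ℝ} (hη : 0 < η) (hη1 : η < 1) :
    ∃ ρ > 0, ∀ z ∈ K ∩ Metric.ball x ρ, ∀ s : ℝ, 0 < s → s ≤ ρ →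
      ∃ w, dist z w ≤ s ∧ Metric.closedBall w ((1 - η) * s) ⊆ K := by
  set L := fderiv ℝ f x with hLdef
  have hLpos : 0 < ‖L‖ := norm_pos_iff.mpr hd
  have hexu : ∃ u : ℂ, (1 - η/2) * ‖L‖ * ‖u‖ < ‖L u‖ := by
    by_contra hcon
    push_neg at hcon
    have : ‖L‖ ≤ (1 - η/2) * ‖L‖ := L.opNorm_le_bound (by nlinarith) hcon
    nlinarith
  obtain ⟨u, hu⟩ := hexu
  have hu0 : u ≠ 0 := by
    intro h
    rw [h] at hu
    simp at hu
  have hunorm : 0 < ‖u‖ := norm_pos_iff.mpr hu0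
  have hekey : ∃ e : ℂ, ‖e‖ = 1 ∧ L e ≤ -((1 - η/2) * ‖L‖) := by
    have hLsmul : ∀ c : ℝ, L (c • u) = c * L u := by
      intro c; rw [ContinuousLinearMap.map_smul, smul_eq_mul]
    have habs : (1 - η/2) * ‖L‖ < ‖u‖⁻¹ * |L u| := by
      rw [Real.norm_eq_abs] at hu
      rw [← div_eq_inv_mul, lt_div_iff₀ hunorm]
      exact hu
    rcases le_or_gt (L u) 0 with hc | hc
    · refine ⟨‖u‖⁻¹ • u, ?_, ?_⟩
      · rw [norm_smul, Real.norm_eq_abs, _root_.abs_of_nonneg (inv_nonneg.mpr hunorm.le),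
          inv_mul_cancel₀ hunorm.ne']
      · rw [hLsmul]
        rw [abs_of_nonpos hc] at habs
        nlinarith
    · refine ⟨-(‖u‖⁻¹ • u), ?_, ?_⟩
      · rw [norm_neg, norm_smul, Real.norm_eq_abs, _root_.abs_of_nonneg (inv_nonneg.mpr hunorm.le),
          inv_mul_cancel₀ hunorm.ne']
      · rw [map_neg, hLsmul]
        rw [abs_of_pos hc] at habs
        nlinarith
  obtain ⟨e, he1, he2⟩ := hekey
  have hsf : HasStrictFDerivAt f L x := hf.hasStrictFDerivAt one_ne_zero
  set c : ℝ := η * ‖L‖ / 8 with hcdef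
  have hcpos : 0 < c := by positivity
  have hev := (hsf.isLittleO.def hcpos)
  rw [Metric.eventually_nhds_iff] at hev
  obtain ⟨ε1, hε1, hball1⟩ := hev
  rw [Metric.eventually_nhds_iff] at hiff
  obtain ⟨ε2, hε2, hball2⟩ := hiff
  set m := min ε1 ε2 with hmdef
  have hm : 0 < m := lt_min hε1 hε2
  refine ⟨m / 4, by positivity, ?_⟩
  rintro z ⟨hzK, hzb⟩ s hs hsρ
  rw [Metric.mem_ball] at hzb
  have hse : ‖s • e‖ = s := by
    rw [norm_smul, he1, mul_one, Real.norm_eq_abs, abs_of_pos hs]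
  refine ⟨z + s • e, ?_, ?_⟩
  · rw [dist_eq_norm]
    have : z - (z + s • e) = -(s • e) := by ring
    rw [this, norm_neg, hse]
  · intro w' hw'
    have h1 : ‖w' - (z + s • e)‖ ≤ (1 - η) * s := mem_closedBall_iff_norm.mp hw'
    have hw'z : ‖w' - z‖ ≤ 2 * s := by
      have hsplit : w' - z = (w' - (z + s • e)) + s • e := by ring
      calc ‖w' - z‖ = ‖(w' - (z + s • e)) + s • e‖ := by rw [← hsplit]
        _ ≤ ‖w' - (z + s • e)‖ + ‖s • e‖ := norm_add_le _ _
        _ ≤ (1 - η) * s + s := by rw [hse]; linarith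
        _ ≤ 2 * s := by nlinarith
    have hzx : dist z x < m := by
      calc dist z x < m / 4 := hzb
        _ ≤ m := by linarith
    have hw'x : dist w' x < m := by
      calc dist w' x ≤ dist w' z + dist z x := dist_triangle _ _ _
        _ = ‖w' - z‖ + dist z x := by rw [dist_eq_norm]
        _ ≤ 2 * s + dist z x := by linarith
        _ < 2 * (m / 4) + m / 4 := by
            have : s ≤ m / 4 := hsρ
            linarith
        _ < m := by linarith
    have hfz : f z ≤ 0 := (hball2 (hzx.trans_le (min_le_right _ _))).mp hzK
    have herr : ‖f w' - f z - L (w' - z)‖ ≤ c * ‖w' - z‖ := by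
      have hpd : dist (w', z) (x, x) < ε1 := by
        rw [Prod.dist_eq]
        exact max_lt (hw'x.trans_le (min_le_left _ _)) (hzx.trans_le (min_le_left _ _))
      exact hball1 hpd
    have hlin : L (w' - z) ≤ -(η * ‖L‖ * s / 2) := by
      have hsplit : w' - z = (w' - (z + s • e)) + s • e := by ring
      rw [hsplit, map_add, ContinuousLinearMap.map_smul, smul_eq_mul]
      have hb1 : L (w' - (z + s • e)) ≤ ‖L‖ * ((1 - η) * s) := by
        calc L (w' - (z + s • e)) ≤ ‖L (w' - (z + s • e))‖ := le_abs_self _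
          _ ≤ ‖L‖ * ‖w' - (z + s • e)‖ := L.le_opNorm _
          _ ≤ ‖L‖ * ((1 - η) * s) := by
              apply mul_le_mul_of_nonneg_left h1 (norm_nonneg _)
      have hb2 : s * L e ≤ s * -((1 - η/2) * ‖L‖) :=
        mul_le_mul_of_nonneg_left he2 hs.le
      nlinarith [hb1, hb2]
    have hfw' : f w' ≤ 0 := by
      have herr2 : f w' - f z - L (w' - z) ≤ c * ‖w' - z‖ := by
        have := herr
        rw [Real.norm_eq_abs] at this
        exact (abs_le.mp this).2
      have hcb : c * ‖w' - z‖ ≤ c * (2 * s) := mul_le_mul_of_nonneg_left hw'z hcpos.le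
      have hceq : c * (2 * s) = η * ‖L‖ * s / 4 := by rw [hcdef]; ring
      have hpos : 0 ≤ η * ‖L‖ * s := by positivity
      linarith
    exact (hball2 (hw'x.trans_le (min_le_right _ _))).mpr hfw'

lemma geomLemma {K : Set ℂ} (hKc : IsCompact K)
    (hC1bd : ∀ x ∈ frontier K, ∃ f : ℂ → ℝ, ContDiffAt ℝ 1 f x ∧ fderiv ℝ f x ≠ 0 ∧
      ∀ᶠ y in 𝓝 x, (y ∈ K ↔ f y ≤ 0))
    {η : ℝ} (hη : 0 < η) (hη1 : η < 1) :
    ∃ s₀ > 0, ∀ s : ℝ, 0 < s → s ≤ s₀ → ∀ z ∈ K, ∃ w, dist z w ≤ s ∧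
      Metric.closedBall w ((1 - η) * s) ⊆ K := by
  have hKcl : IsClosed K := hKc.isClosed
  have hfrK : frontier K ⊆ K := hKcl.frontier_subset
  have hfrc : IsCompact (frontier K) := hKc.of_isClosed_subset isClosed_frontier hfrK
  have hloc : ∀ x ∈ frontier K, ∃ ρ, 0 < ρ ∧ ∀ z ∈ K ∩ Metric.ball x ρ, ∀ s : ℝ,
      0 < s → s ≤ ρ → ∃ w, dist z w ≤ s ∧ Metric.closedBall w ((1 - η) * s) ⊆ K := by
    intro x hx
    obtain ⟨f, hf, hd, hiff⟩ := hC1bd x hx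
    obtain ⟨ρ, hρ, hP⟩ := bdryLocal x f hf hd hiff hη hη1
    exact ⟨ρ, hρ, hP⟩
  choose! ρ hρpos hP using hloc
  -- finite subcover of the frontier
  have hcov : frontier K ⊆ ⋃ i : ↥(frontier K), Metric.ball (i : ℂ) (ρ i / 2) := by
    intro y hy
    exact Set.mem_iUnion.mpr ⟨⟨y, hy⟩, Metric.mem_ball_self (by
      have := hρpos y hy; linarith)⟩
  obtain ⟨t, ht⟩ := hfrc.elim_finite_subcover
    (fun i : ↥(frontier K) => Metric.ball (i : ℂ) (ρ i / 2)) (fun i => Metric.isOpen_ball) hcov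
  set U : Set ℂ := ⋃ i ∈ t, Metric.ball (i : ℂ) (ρ i / 2) with hUdef
  have hUopen : IsOpen U := isOpen_biUnion (fun i _ => Metric.isOpen_ball)
  set V : Set ℂ := K \ U with hVdef
  have hVc : IsCompact V := hKc.diff hUopen
  have hVint : V ⊆ interior K := by
    rintro z ⟨hzK, hzU⟩
    by_contra hzi
    have hzfr : z ∈ frontier K := ⟨subset_closure hzK, hzi⟩
    have := ht hzfr
    rw [Set.mem_iUnion] at this
    obtain ⟨i, hi⟩ := this
    rw [Set.mem_iUnion] at hi
    obtain ⟨him, hi⟩ := hi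
    exact hzU (Set.mem_biUnion him hi)
  obtain ⟨δ, hδ, hth⟩ := hVc.exists_cthickening_subset_open isOpen_interior hVint
  have hr0 : ∃ r0 > 0, ∀ i ∈ t, r0 ≤ ρ (i : ℂ) / 2 := by
    by_cases hne : t.Nonempty
    · refine ⟨t.inf' hne (fun i => ρ (i : ℂ) / 2), ?_, ?_⟩
      · rw [gt_iff_lt, Finset.lt_inf'_iff]
        intro i _
        have := hρpos (i : ℂ) i.2
        linarith
      · intro i hi
        exact Finset.inf'_le _ hi
    · refine ⟨1, one_pos, ?_⟩
      intro i hi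
      exact absurd ⟨i, hi⟩ hne
  obtain ⟨r0, hr0pos, hr0le⟩ := hr0
  refine ⟨min δ r0, lt_min hδ hr0pos, ?_⟩
  intro s hs hss0 z hz
  by_cases hzU : z ∈ U
  · rw [hUdef, Set.mem_iUnion] at hzU
    obtain ⟨i, hi⟩ := hzU
    rw [Set.mem_iUnion] at hi
    obtain ⟨him, hib⟩ := hi
    have hzball : z ∈ Metric.ball (i : ℂ) (ρ (i : ℂ)) := by
      rw [Metric.mem_ball] at hib ⊢
      have := hρpos (i : ℂ) i.2
      linarith
    refine hP (i : ℂ) i.2 z ⟨hz, hzball⟩ s hs ?_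
    calc s ≤ min δ r0 := hss0
      _ ≤ r0 := min_le_right _ _
      _ ≤ ρ (i : ℂ) / 2 := hr0le i him
      _ ≤ ρ (i : ℂ) := by have := hρpos (i : ℂ) i.2; linarith
  · have hzV : z ∈ V := ⟨hz, hzU⟩
    refine ⟨z, by simp [hs.le], ?_⟩
    have hsub1 : Metric.closedBall z ((1 - η) * s) ⊆ Metric.closedBall z δ := by
      apply Metric.closedBall_subset_closedBall
      have h1 : (1 - η) * s ≤ s := by nlinarith
      have h2 : s ≤ δ := le_trans hss0 (min_le_left _ _)
      linarith
    calc Metric.closedBall z ((1 - η) * s) ⊆ Metric.closedBall z δ := hsub1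
      _ ⊆ Metric.cthickening δ V := Metric.closedBall_subset_cthickening hzV δ
      _ ⊆ interior K := hth
      _ ⊆ K := interior_subset

end BMAux

set_option maxHeartbeats 1000000 in
theorem stmt7 (K : Set ℂ) (hKc : IsCompact K) (hKint : closure (interior K) = K)
    (hC1bd : ∀ x ∈ frontier K, ∃ f : ℂ → ℝ, ContDiffAt ℝ 1 f x ∧ fderiv ℝ f x ≠ 0 ∧
      ∀ᶠ y in 𝓝 x, (y ∈ K ↔ f y ≤ 0)) :
    ∀ R : ℂ → ℝ, ContinuousOn R K →
    ∀ ε > 0, ∃ C > 0, ∀ (n : ℕ) (p : Polynomial ℂ), p.natDegree ≤ n →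
      ∀ z ∈ K, Real.exp (-(n : ℝ) * R z) * ‖p.eval z‖ ≤
        C * (1 + ε) ^ n *
          ∫ w in K, Real.exp (-(n : ℝ) * R w) * ‖p.eval w‖ := by
  
  intro R hR ε hε
  set β := Real.sqrt (1 + ε) with hβdef
  have hβ1 : 1 < β := by
    rw [hβdef]
    have h := (Real.lt_sqrt (by norm_num : (0:ℝ) ≤ 1)).mpr (by nlinarith : (1:ℝ)^2 < 1 + ε)
    exact h
  have hβsq : β ^ 2 = 1 + ε := Real.sq_sqrt (by linarith)
  have hβpos : 0 < β := lt_trans one_pos hβ1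
  have hβinv : β⁻¹ < 1 := by
    rw [inv_lt_one_iff₀]
    right; exact hβ1
  have hβinvpos : 0 < β⁻¹ := inv_pos.mpr hβpos
  set η := (1 - β⁻¹) / 2 with hηdef
  have hη : 0 < η := by rw [hηdef]; linarith
  have hη1 : η < 1 := by rw [hηdef]; linarith
  have h2η : 1 - 2 * η = β⁻¹ := by rw [hηdef]; ring
  have hRuc : UniformContinuousOn R K := hKc.uniformContinuousOn_of_continuous hR
  have hlogβ : 0 < Real.log β := Real.log_pos hβ1
  obtain ⟨δ1, hδ1, hRmod⟩ := Metric.uniformContinuousOn_iff.mp hRuc (Real.log β) hlogβ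
  obtain ⟨s₀, hs₀, hgeom⟩ := geomLemma hKc hC1bd hη hη1
  set s := min s₀ (δ1 / 4) with hsdef
  have hs : 0 < s := lt_min hs₀ (by linarith)
  have hss0 : s ≤ s₀ := min_le_left _ _
  have hs4 : s ≤ δ1 / 4 := min_le_right _ _
  refine ⟨(Real.pi * (η * s) ^ 2)⁻¹, by positivity, ?_⟩
  intro n p hdeg z hz
  obtain ⟨w₀, hzw, hball⟩ := hgeom s hs hss0 z hz
  set t := (1 - 2 * η) * s with htdef
  have ht : 0 < t := by rw [htdef, h2η]; positivity
  have hts : t ≤ s := by rw [htdef]; nlinarith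
  have hsph : (Metric.sphere w₀ t).Nonempty := NormedSpace.sphere_nonempty.mpr ht.le
  obtain ⟨ζ₀, hζ₀mem, hζ₀max'⟩ := (isCompact_sphere w₀ t).exists_isMaxOn hsph
    ((p.continuous.norm).continuousOn)
  have hζ₀max : ∀ ζ ∈ Metric.sphere w₀ t, ‖p.eval ζ‖ ≤ ‖p.eval ζ₀‖ := fun ζ hζ => hζ₀max' hζ
  set M := ‖p.eval ζ₀‖ with hMdef
  have hgrow : ‖p.eval z‖ ≤ β ^ n * M := by
    have hg := polyGrowth p hdeg w₀ z ht hts hzw hζ₀max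
    have hst : s / t = β := by
      rw [htdef, h2η]
      field_simp
    rwa [hst] at hg
  have hsm := submean p ζ₀ (r := η * s) (by positivity)
  have hζ₀w : dist ζ₀ w₀ = t := Metric.mem_sphere.mp hζ₀mem
  have hDK : Metric.closedBall ζ₀ (η * s) ⊆ K := by
    intro ξ hξ
    apply hball
    rw [Metric.mem_closedBall] at hξ ⊢
    calc dist ξ w₀ ≤ dist ξ ζ₀ + dist ζ₀ w₀ := dist_triangle _ _ _
      _ ≤ η * s + t := by rw [hζ₀w]; linarith
      _ ≤ (1 - η) * s := by rw [htdef]; nlinarith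
  have hD3s : ∀ ξ ∈ Metric.closedBall ζ₀ (η * s), dist ξ z < δ1 := by
    intro ξ hξ
    rw [Metric.mem_closedBall] at hξ
    have hwz : dist w₀ z ≤ s := by rw [dist_comm]; exact hzw
    calc dist ξ z ≤ dist ξ ζ₀ + dist ζ₀ z := dist_triangle _ _ _
      _ ≤ dist ξ ζ₀ + (dist ζ₀ w₀ + dist w₀ z) := by linarith [dist_triangle ζ₀ w₀ z]
      _ ≤ η * s + (t + s) := by rw [hζ₀w]; linarith
      _ ≤ 3 * s := by rw [htdef]; nlinarith
      _ < δ1 := by linarith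
  have hRcomp : ∀ ξ ∈ Metric.closedBall ζ₀ (η * s), ‖p.eval ξ‖ ≤
      Real.exp ((n : ℝ) * R z) * β ^ n * (Real.exp (-(n : ℝ) * R ξ) * ‖p.eval ξ‖) := by
    intro ξ hξ
    have hξK := hDK hξ
    have hRξ : R ξ ≤ R z + Real.log β := by
      have hd := hRmod ξ hξK z hz (hD3s ξ hξ)
      rw [Real.dist_eq] at hd
      have := (abs_lt.mp hd).2
      linarith
    have hβexp : β ^ n = Real.exp ((n : ℝ) * Real.log β) := by
      rw [← Real.log_pow, Real.exp_log (pow_pos hβpos n)]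
    have key : (1 : ℝ) ≤ Real.exp ((n : ℝ) * R z) * β ^ n * Real.exp (-(n : ℝ) * R ξ) := by
      rw [hβexp, ← Real.exp_add, ← Real.exp_add]
      rw [show (1:ℝ) = Real.exp 0 from (Real.exp_zero).symm]
      apply Real.exp_le_exp.mpr
      have hn0 : (0:ℝ) ≤ (n:ℝ) := Nat.cast_nonneg n
      nlinarith
    have h := mul_le_mul_of_nonneg_right key (norm_nonneg (p.eval ξ))
    rw [one_mul] at h
    calc ‖p.eval ξ‖ ≤ Real.exp ((n : ℝ) * R z) * β ^ n * Real.exp (-(n : ℝ) * R ξ)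
        * ‖p.eval ξ‖ := h
      _ = Real.exp ((n : ℝ) * R z) * β ^ n * (Real.exp (-(n : ℝ) * R ξ) * ‖p.eval ξ‖) := by
        ring
  have hKmeas : MeasurableSet K := hKc.isClosed.measurableSet
  have hWcont : ContinuousOn (fun ξ => Real.exp (-(n : ℝ) * R ξ) * ‖p.eval ξ‖) K := by
    apply ContinuousOn.mul
    · exact Real.continuous_exp.comp_continuousOn (continuousOn_const.mul hR)
    · exact (p.continuous.norm).continuousOn
  have hWint : IntegrableOn (fun ξ => Real.exp (-(n : ℝ) * R ξ) * ‖p.eval ξ‖) K volume :=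
    hWcont.integrableOn_compact hKc
  have hWintD : IntegrableOn (fun ξ => Real.exp (-(n : ℝ) * R ξ) * ‖p.eval ξ‖)
      (Metric.closedBall ζ₀ (η * s)) volume := hWint.mono_set hDK
  have hnormint : IntegrableOn (fun ξ => ‖p.eval ξ‖) (Metric.closedBall ζ₀ (η * s)) volume :=
    (p.continuous.norm).continuousOn.integrableOn_compact (isCompact_closedBall _ _)
  have step1 : ∫ ξ in Metric.closedBall ζ₀ (η * s), ‖p.eval ξ‖ ≤
      ∫ ξ in Metric.closedBall ζ₀ (η * s),
        Real.exp ((n : ℝ) * R z) * β ^ n * (Real.exp (-(n : ℝ) * R ξ) * ‖p.eval ξ‖) := by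
    apply setIntegral_mono_on hnormint (hWintD.const_mul _) measurableSet_closedBall hRcomp
  have step2 : ∫ ξ in Metric.closedBall ζ₀ (η * s), Real.exp (-(n : ℝ) * R ξ) * ‖p.eval ξ‖ ≤
      ∫ ξ in K, Real.exp (-(n : ℝ) * R ξ) * ‖p.eval ξ‖ := by
    apply setIntegral_mono_set hWint
      (Filter.Eventually.of_forall (fun ξ => by positivity))
      (HasSubset.Subset.eventuallyLE hDK)
  have big : ∫ ξ in Metric.closedBall ζ₀ (η * s), ‖p.eval ξ‖ ≤
      Real.exp ((n : ℝ) * R z) * β ^ n * ∫ ξ in K, Real.exp (-(n : ℝ) * R ξ) * ‖p.eval ξ‖ := by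
    calc ∫ ξ in Metric.closedBall ζ₀ (η * s), ‖p.eval ξ‖
        ≤ ∫ ξ in Metric.closedBall ζ₀ (η * s),
            Real.exp ((n : ℝ) * R z) * β ^ n * (Real.exp (-(n : ℝ) * R ξ) * ‖p.eval ξ‖) := step1
      _ = Real.exp ((n : ℝ) * R z) * β ^ n *
            ∫ ξ in Metric.closedBall ζ₀ (η * s), Real.exp (-(n : ℝ) * R ξ) * ‖p.eval ξ‖ := by
          rw [MeasureTheory.integral_const_mul]
      _ ≤ Real.exp ((n : ℝ) * R z) * β ^ n *
            ∫ ξ in K, Real.exp (-(n : ℝ) * R ξ) * ‖p.eval ξ‖ := by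
          apply mul_le_mul_of_nonneg_left step2 (by positivity)
  have hMle : M ≤ (Real.pi * (η * s) ^ 2)⁻¹ * ∫ ξ in Metric.closedBall ζ₀ (η * s), ‖p.eval ξ‖ := by
    rw [le_inv_mul_iff₀ (by positivity : (0:ℝ) < Real.pi * (η * s) ^ 2)]
    exact hsm
  have hIK : 0 ≤ ∫ ξ in K, Real.exp (-(n : ℝ) * R ξ) * ‖p.eval ξ‖ :=
    setIntegral_nonneg hKmeas (fun ξ _ => by positivity)
  have hexpz : 0 < Real.exp (-(n : ℝ) * R z) := Real.exp_pos _
  calc Real.exp (-(n : ℝ) * R z) * ‖p.eval z‖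
      ≤ Real.exp (-(n : ℝ) * R z) * (β ^ n * M) :=
        mul_le_mul_of_nonneg_left hgrow hexpz.le
    _ ≤ Real.exp (-(n : ℝ) * R z) * (β ^ n *
          ((Real.pi * (η * s) ^ 2)⁻¹ * ∫ ξ in Metric.closedBall ζ₀ (η * s), ‖p.eval ξ‖)) := by
        apply mul_le_mul_of_nonneg_left _ hexpz.le
        apply mul_le_mul_of_nonneg_left hMle (by positivity)
    _ ≤ Real.exp (-(n : ℝ) * R z) * (β ^ n * ((Real.pi * (η * s) ^ 2)⁻¹ *
          (Real.exp ((n : ℝ) * R z) * β ^ n *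
            ∫ ξ in K, Real.exp (-(n : ℝ) * R ξ) * ‖p.eval ξ‖))) := by
        apply mul_le_mul_of_nonneg_left _ hexpz.le
        apply mul_le_mul_of_nonneg_left _ (by positivity)
        apply mul_le_mul_of_nonneg_left big (by positivity)
    _ = (Real.pi * (η * s) ^ 2)⁻¹ * (1 + ε) ^ n *
          ∫ ξ in K, Real.exp (-(n : ℝ) * R ξ) * ‖p.eval ξ‖ := by
        rw [← hβsq, ← pow_mul, two_mul, pow_add]
        have hE : Real.exp (-(n : ℝ) * R z) * Real.exp ((n : ℝ) * R z) = 1 := by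
          rw [← Real.exp_add]; simp
        set I := ∫ ξ in K, Real.exp (-(n : ℝ) * R ξ) * ‖p.eval ξ‖
        linear_combination (β ^ n * (Real.pi * (η * s) ^ 2)⁻¹ * β ^ n * I) * hE
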